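/- Let μ be a probability measure on ℝ² with density f with respect to Lebesgue measure, whose coordinate marginals have densities f₁, f₂ that are continuous and strictly positive on all of ℝ, with CDFs F₁, F₂ (strictly increasing continuous bijections onto (0,1)). Define the copula density c(u,v) = f(F₁⁻¹(u), F₂⁻¹(v)) / (f₁(F₁⁻¹(u)) · f₂(F₂⁻¹(v))) for (u,v) ∈ (0,1)². If the function (x,y) ↦ f(x,y) · ln( f(x,y) / (f₁(x) f₂(y)) ) is Lebesgue-integrable on ℝ², then ∫_{ℝ²} f(x,y) ln( f(x,y)/(f₁(x) f₂(y)) ) d(x,y) = ∫_{(0,1)²} c(u,v) ln c(u,v) d(u,v). In other words, the mutual information of the two coordinates equals the negative differential entropy of the copula density. -/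

import Mathlib

open MeasureTheory Set Filter

lemma my_withDensity_prod {f g : ℝ → ENNReal} (hf : Measurable f) (hg : Measurable g) :
    (volume.withDensity f).prod (volume.withDensity g)
      = ((volume : Measure ℝ).prod volume).withDensity (fun p => f p.1 * g p.2) := by
  ext s hs
  have hm : Measurable fun a : ℝ × ℝ => f a.1 * g a.2 :=
    (hf.comp measurable_fst).mul (hg.comp measurable_snd)
  rw [Measure.prod_apply hs, withDensity_apply _ hs,
    ← lintegral_indicator hs _, MeasureTheory.lintegral_prod _
      (hm.indicator hs).aemeasurable,
    lintegral_withDensity_eq_lintegral_mul _ hf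
      (measurable_measure_prodMk_left hs)]
  congr 1
  ext x
  rw [Pi.mul_apply, withDensity_apply _ (measurable_prodMk_left hs), ← lintegral_indicator
    (measurable_prodMk_left hs) _, ← lintegral_const_mul _ (hg.indicator (measurable_prodMk_left hs))]
  congr 1
  ext y
  by_cases hxy : (x, y) ∈ s
  · simp [indicator_of_mem, hxy, Set.indicator_of_mem (show y ∈ Prod.mk x ⁻¹' s from hxy)]
  · simp [indicator_of_notMem, hxy, Set.indicator_of_notMem (show y ∉ Prod.mk x ⁻¹' s from hxy)]

lemma my_cdf_map (f₁ : ℝ → ℝ) (hc : Continuous f₁) (hpos : ∀ x, 0 < f₁ x)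
    (hl : ∫⁻ x, ENNReal.ofReal (f₁ x) = 1)
    (F : ℝ → ℝ) (hF : ∀ x, F x = ∫ t in Iic x, f₁ t) :
    StrictMono F ∧ (∀ x, F x ∈ Ioo (0:ℝ) 1) ∧ Continuous F ∧
      (volume.withDensity fun x => ENNReal.ofReal (f₁ x)).map F
        = volume.restrict (Ioo 0 1) := by
  have hnn : ∀ x, 0 ≤ f₁ x := fun x => (hpos x).le
  have hint : Integrable f₁ volume := by
    refine ⟨hc.aestronglyMeasurable, ?_⟩
    rw [HasFiniteIntegral]
    have : ∀ x : ℝ, ‖f₁ x‖ₑ = ENNReal.ofReal (f₁ x) := by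
      intro x
      exact Real.enorm_of_nonneg (hnn x)
    simp only [this, hl]
    exact ENNReal.one_lt_top
  have htot : ∫ x, f₁ x = 1 := by
    rw [MeasureTheory.integral_eq_lintegral_of_nonneg_ae (Eventually.of_forall hnn)
      hc.aestronglyMeasurable, hl, ENNReal.toReal_one]
  have hsub : ∀ a b : ℝ, a ≤ b → F b - F a = ∫ t in Ioc a b, f₁ t := by
    intro a b hab
    rw [hF, hF, intervalIntegral.integral_Iic_sub_Iic hint.integrableOn hint.integrableOn,
      intervalIntegral.integral_of_le hab]
  have hposIoc : ∀ a b : ℝ, a < b → 0 < ∫ t in Ioc a b, f₁ t := by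
    intro a b hab
    rw [setIntegral_pos_iff_support_of_nonneg_ae (Eventually.of_forall hnn)
      hint.integrableOn]
    have : Function.support f₁ = univ := by
      ext x; simp [Function.mem_support, (hpos x).ne']
    rw [this, univ_inter, Real.volume_Ioc]
    simp [hab]
  have hmono : StrictMono F := by
    intro a b hab
    have := hposIoc a b hab
    have h2 := hsub a b hab.le
    linarith
  have hFc : Continuous F := by
    have : F = fun b => (∫ t in (0:ℝ)..b, f₁ t) + F 0 := by
      funext b
      rw [← intervalIntegral.integral_Iic_sub_Iic hint.integrableOn hint.integrableOn, ← hF, ← hF]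
      ring
    rw [this]
    exact (hint.continuous_primitive 0).add continuous_const
  have hF0 : ∀ x, 0 < F x := by
    intro x
    have h1 := hposIoc (x - 1) x (by linarith)
    have h2 := hsub (x - 1) x (by linarith)
    have h3 : 0 ≤ F (x - 1) := by
      rw [hF]; exact setIntegral_nonneg measurableSet_Iic fun t _ => hnn t
    linarith
  have hcompl : ∀ x : ℝ, F x + ∫ t in Ioi x, f₁ t = 1 := by
    intro x
    rw [hF, ← htot]
    rw [← MeasureTheory.integral_add_compl measurableSet_Iic hint, compl_Iic]
  have hF1 : ∀ x, F x < 1 := by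
    intro x
    have h1 : 0 < ∫ t in Ioi x, f₁ t := by
      rw [setIntegral_pos_iff_support_of_nonneg_ae (Eventually.of_forall hnn)
        hint.integrableOn]
      have : Function.support f₁ = univ := by
        ext z; simp [Function.mem_support, (hpos z).ne']
      rw [this, univ_inter]
      simp [Real.volume_Ioi]
    have := hcompl x
    linarith
  have hmem : ∀ x, F x ∈ Ioo (0:ℝ) 1 := fun x => ⟨hF0 x, hF1 x⟩
  refine ⟨hmono, hmem, hFc, ?_⟩
  -- limits along ℕ
  have htendTop : Tendsto (fun n : ℕ => F (n : ℝ)) atTop (nhds 1) := by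
    have hu : (⋃ n : ℕ, Iic (n : ℝ)) = univ := by
      refine eq_univ_of_forall fun x => ?_
      obtain ⟨n, hn⟩ := exists_nat_ge x
      exact mem_iUnion.2 ⟨n, hn⟩
    have := tendsto_setIntegral_of_monotone (s := fun n : ℕ => Iic (n : ℝ))
      (fun n : ℕ => measurableSet_Iic)
      (fun m n hmn => Iic_subset_Iic.2 (by exact_mod_cast hmn)) (by rw [hu]; exact hint.integrableOn)
    rw [hu] at this
    simp only [Measure.restrict_univ, htot] at this
    simpa only [hF] using this
  have htendBot : Tendsto (fun n : ℕ => F (-(n : ℝ))) atTop (nhds 0) := by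
    have hu : (⋃ n : ℕ, Ioi (-(n : ℝ))) = univ := by
      refine eq_univ_of_forall fun x => ?_
      obtain ⟨n, hn⟩ := exists_nat_gt (-x)
      exact mem_iUnion.2 ⟨n, show -(n:ℝ) < x by linarith⟩
    have h2 := tendsto_setIntegral_of_monotone (s := fun n : ℕ => Ioi (-(n : ℝ)))
      (fun n : ℕ => measurableSet_Ioi)
      (fun m n hmn => Ioi_subset_Ioi (neg_le_neg (Nat.cast_le.2 hmn)))
      (by rw [hu]; exact hint.integrableOn)
    rw [hu] at h2
    simp only [Measure.restrict_univ, htot] at h2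
    have h3 : (fun n : ℕ => F (-(n : ℝ))) = fun n : ℕ => 1 - ∫ t in Ioi (-(n:ℝ)), f₁ t := by
      funext n
      have := hcompl (-(n : ℝ))
      linarith
    rw [h3]
    have := h2.const_sub 1
    simpa using this
  have hsurj : ∀ t ∈ Ioo (0:ℝ) 1, ∃ x, F x = t := by
    intro t ht
    obtain ⟨n, hn⟩ := (htendTop.eventually (eventually_gt_nhds ht.2)).exists
    obtain ⟨m, hm⟩ := (htendBot.eventually (eventually_lt_nhds ht.1)).exists
    have hsub' : t ∈ uIcc (F (-(m : ℝ))) (F (n : ℝ)) := by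
      rw [mem_uIcc]
      left
      exact ⟨hm.le, hn.le⟩
    obtain ⟨x, -, hx⟩ := intermediate_value_uIcc (hFc.continuousOn) hsub'
    exact ⟨x, hx⟩
  -- the pushforward
  have hwdIic : ∀ x : ℝ, (volume.withDensity fun y => ENNReal.ofReal (f₁ y)) (Iic x)
      = ENNReal.ofReal (F x) := by
    intro x
    rw [withDensity_apply _ measurableSet_Iic, hF,
      ofReal_integral_eq_lintegral_ofReal hint.integrableOn
        (Eventually.of_forall fun t => hnn t)]
  have hwduniv : (volume.withDensity fun y => ENNReal.ofReal (f₁ y)) univ = 1 := by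
    rw [withDensity_apply _ MeasurableSet.univ, setLIntegral_univ, hl]
  haveI : IsFiniteMeasure ((volume.withDensity fun y => ENNReal.ofReal (f₁ y)).map F) := by
    constructor
    rw [Measure.map_apply hFc.measurable MeasurableSet.univ, preimage_univ, hwduniv]
    exact ENNReal.one_lt_top
  refine Measure.ext_of_Iic _ _ fun t => ?_
  rw [Measure.map_apply hFc.measurable measurableSet_Iic,
    Measure.restrict_apply measurableSet_Iic]
  rcases le_or_gt t 0 with ht0 | ht0
  · have h1 : F ⁻¹' Iic t = ∅ := by
      ext y; simp only [mem_preimage, mem_Iic, mem_empty_iff_false, iff_false, not_le]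
      exact lt_of_le_of_lt ht0 (hF0 y)
    have h2 : Iic t ∩ Ioo (0:ℝ) 1 = ∅ := by
      ext z; simp only [mem_inter_iff, mem_Iic, mem_Ioo, mem_empty_iff_false, iff_false]
      rintro ⟨hz, hz0, -⟩; linarith
    rw [h1, h2]; simp
  rcases lt_or_ge t 1 with ht1 | ht1
  · obtain ⟨x, hx⟩ := hsurj t ⟨ht0, ht1⟩
    have h1 : F ⁻¹' Iic t = Iic x := by
      ext y
      simp only [mem_preimage, mem_Iic, ← hx]
      exact hmono.le_iff_le
    have h2 : Iic t ∩ Ioo (0:ℝ) 1 = Ioc 0 t := by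
      ext z
      simp only [mem_inter_iff, mem_Iic, mem_Ioo, mem_Ioc]
      constructor
      · rintro ⟨hz, hz0, -⟩; exact ⟨hz0, hz⟩
      · rintro ⟨hz0, hz⟩; exact ⟨hz, hz0, lt_of_le_of_lt hz ht1⟩
    rw [h1, h2, hwdIic, hx, Real.volume_Ioc]
    simp
  · have h1 : F ⁻¹' Iic t = univ := by
      refine eq_univ_of_forall fun y => ?_
      simp only [mem_preimage, mem_Iic]
      exact le_trans (hF1 y).le ht1
    have h2 : Iic t ∩ Ioo (0:ℝ) 1 = Ioo 0 1 := by
      refine inter_eq_right.2 fun z hz => ?_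
      exact le_trans hz.2.le ht1
    rw [h1, h2, hwduniv, Real.volume_Ioo]
    norm_num

/-- **Mutual information equals the negative copula entropy.**
Let `μ` be a bivariate probability law with density `f`, whose marginals have continuous
strictly positive densities `f₁, f₂` with CDFs `F₁, F₂` (with inverses `Finv₁, Finv₂`),
and let `c(u,v) = f(F₁⁻¹(u), F₂⁻¹(v)) / (f₁(F₁⁻¹(u))·f₂(F₂⁻¹(v)))` be the copula
density on `(0,1)²`. If `f·ln(f/(f₁f₂))` is integrable on `ℝ²`, then
`∫ f ln(f/(f₁f₂)) = ∫_{(0,1)²} c ln c`. -/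
theorem mutualInformation_eq_neg_copula_entropy
    (μ : Measure (ℝ × ℝ)) [IsProbabilityMeasure μ]
    (f : ℝ → ℝ → ℝ) (hfm : Measurable fun p : ℝ × ℝ => f p.1 p.2)
    (hμ : μ = volume.withDensity fun p : ℝ × ℝ => ENNReal.ofReal (f p.1 p.2))
    (f₁ f₂ : ℝ → ℝ)
    (hf₁c : Continuous f₁) (hf₂c : Continuous f₂)
    (hf₁pos : ∀ x : ℝ, 0 < f₁ x) (hf₂pos : ∀ y : ℝ, 0 < f₂ y)
    (hμ₁ : μ.map Prod.fst = volume.withDensity fun x => ENNReal.ofReal (f₁ x))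
    (hμ₂ : μ.map Prod.snd = volume.withDensity fun y => ENNReal.ofReal (f₂ y))
    (F₁ F₂ : ℝ → ℝ)
    (hF₁ : ∀ x : ℝ, F₁ x = ∫ t in Iic x, f₁ t)
    (hF₂ : ∀ y : ℝ, F₂ y = ∫ t in Iic y, f₂ t)
    (Finv₁ Finv₂ : ℝ → ℝ)
    (hFinv₁ : ∀ x : ℝ, Finv₁ (F₁ x) = x)
    (hFinv₂ : ∀ y : ℝ, Finv₂ (F₂ y) = y)
    (c : ℝ → ℝ → ℝ)
    (hcdef : ∀ u ∈ Ioo (0 : ℝ) 1, ∀ v ∈ Ioo (0 : ℝ) 1,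
      c u v = f (Finv₁ u) (Finv₂ v) / (f₁ (Finv₁ u) * f₂ (Finv₂ v)))
    (hint : Integrable
      (fun p : ℝ × ℝ => f p.1 p.2 * Real.log (f p.1 p.2 / (f₁ p.1 * f₂ p.2))) volume) :
    ∫ p : ℝ × ℝ, f p.1 p.2 * Real.log (f p.1 p.2 / (f₁ p.1 * f₂ p.2))
      = ∫ q in Ioo (0 : ℝ) 1 ×ˢ Ioo (0 : ℝ) 1, c q.1 q.2 * Real.log (c q.1 q.2) := by
  have hl₁ : ∫⁻ x, ENNReal.ofReal (f₁ x) = 1 := by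
    have h : IsProbabilityMeasure (μ.map Prod.fst) :=
      Measure.isProbabilityMeasure_map measurable_fst.aemeasurable
    rw [hμ₁] at h
    have h2 := h.measure_univ
    rwa [withDensity_apply _ MeasurableSet.univ, setLIntegral_univ] at h2
  have hl₂ : ∫⁻ y, ENNReal.ofReal (f₂ y) = 1 := by
    have h : IsProbabilityMeasure (μ.map Prod.snd) :=
      Measure.isProbabilityMeasure_map measurable_snd.aemeasurable
    rw [hμ₂] at h
    have h2 := h.measure_univ
    rwa [withDensity_apply _ MeasurableSet.univ, setLIntegral_univ] at h2
  obtain ⟨hmono₁, hmem₁, hFc₁, hmap₁⟩ := my_cdf_map f₁ hf₁c hf₁pos hl₁ F₁ hF₁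
  obtain ⟨hmono₂, hmem₂, hFc₂, hmap₂⟩ := my_cdf_map f₂ hf₂c hf₂pos hl₂ F₂ hF₂
  have hTmeas : Measurable (Prod.map F₁ F₂) := hFc₁.measurable.prodMap hFc₂.measurable
  have hTinj : Function.Injective (Prod.map F₁ F₂) :=
    Function.Injective.prodMap hmono₁.injective hmono₂.injective
  have hTemb : MeasurableEmbedding (Prod.map F₁ F₂) := hTmeas.measurableEmbedding hTinj
  haveI hp₁ : IsProbabilityMeasure (volume.withDensity fun x => ENNReal.ofReal (f₁ x)) := by
    constructor
    rw [withDensity_apply _ MeasurableSet.univ, setLIntegral_univ, hl₁]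
  haveI hp₂ : IsProbabilityMeasure (volume.withDensity fun y => ENNReal.ofReal (f₂ y)) := by
    constructor
    rw [withDensity_apply _ MeasurableSet.univ, setLIntegral_univ, hl₂]
  have hprodmap : Measure.map (Prod.map F₁ F₂)
      ((volume.withDensity fun x => ENNReal.ofReal (f₁ x)).prod
        (volume.withDensity fun y => ENNReal.ofReal (f₂ y)))
      = volume.restrict (Ioo 0 1 ×ˢ Ioo 0 1) := by
    rw [← Measure.map_prod_map _ _ hFc₁.measurable hFc₂.measurable, hmap₁, hmap₂,
      Measure.prod_restrict, ← Measure.volume_eq_prod]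
  set g : ℝ × ℝ → ℝ := fun p =>
    (f p.1 p.2 / (f₁ p.1 * f₂ p.2)) * Real.log (f p.1 p.2 / (f₁ p.1 * f₂ p.2)) with hg
  have hqmeas : Measurable fun p : ℝ × ℝ => f p.1 p.2 / (f₁ p.1 * f₂ p.2) :=
    hfm.div ((hf₁c.measurable.comp measurable_fst).mul (hf₂c.measurable.comp measurable_snd))
  have hgmeas : Measurable g := hqmeas.mul (Real.measurable_log.comp hqmeas)
  have hcomp : (fun q : ℝ × ℝ => c q.1 q.2 * Real.log (c q.1 q.2)) ∘ (Prod.map F₁ F₂) = g := by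
    funext p
    have h1 : c (F₁ p.1) (F₂ p.2) = f p.1 p.2 / (f₁ p.1 * f₂ p.2) := by
      rw [hcdef _ (hmem₁ p.1) _ (hmem₂ p.2), hFinv₁, hFinv₂]
    show c (F₁ p.1) (F₂ p.2) * Real.log (c (F₁ p.1) (F₂ p.2)) = g p
    rw [h1, hg]
  have step1 : ∫ q in Ioo (0:ℝ) 1 ×ˢ Ioo (0:ℝ) 1, c q.1 q.2 * Real.log (c q.1 q.2)
      = ∫ p, g p ∂((volume.withDensity fun x => ENNReal.ofReal (f₁ x)).prod
        (volume.withDensity fun y => ENNReal.ofReal (f₂ y))) := by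
    rw [← hprodmap, integral_map hTmeas.aemeasurable
      (by rw [hTemb.aestronglyMeasurable_map_iff, hcomp]; exact hgmeas.aestronglyMeasurable)]
    exact integral_congr_ae (Filter.Eventually.of_forall fun p => congrFun hcomp p)
  have step2 : ∫ p, g p ∂((volume.withDensity fun x => ENNReal.ofReal (f₁ x)).prod
        (volume.withDensity fun y => ENNReal.ofReal (f₂ y)))
      = ∫ p : ℝ × ℝ, (f₁ p.1 * f₂ p.2) * g p := by
    rw [my_withDensity_prod (by fun_prop) (by fun_prop), ← Measure.volume_eq_prod]
    have hd : (fun p : ℝ × ℝ => ENNReal.ofReal (f₁ p.1) * ENNReal.ofReal (f₂ p.2))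
        = fun p : ℝ × ℝ => ((Real.toNNReal (f₁ p.1) * Real.toNNReal (f₂ p.2) : NNReal) : ENNReal) := by
      funext p
      rw [ENNReal.coe_mul]
      rfl
    rw [hd, integral_withDensity_eq_integral_smul (by fun_prop) g]
    congr 1
    funext p
    rw [NNReal.smul_def, NNReal.coe_mul, Real.coe_toNNReal _ (hf₁pos _).le,
      Real.coe_toNNReal _ (hf₂pos _).le, smul_eq_mul]
  have step3 : ∫ p : ℝ × ℝ, (f₁ p.1 * f₂ p.2) * g p
      = ∫ p : ℝ × ℝ, f p.1 p.2 * Real.log (f p.1 p.2 / (f₁ p.1 * f₂ p.2)) := by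
    congr 1
    funext p
    have hne : f₁ p.1 * f₂ p.2 ≠ 0 := (mul_pos (hf₁pos _) (hf₂pos _)).ne'
    rw [hg]
    rw [show (f₁ p.1 * f₂ p.2) * ((f p.1 p.2 / (f₁ p.1 * f₂ p.2)) *
        Real.log (f p.1 p.2 / (f₁ p.1 * f₂ p.2)))
      = (f p.1 p.2 / (f₁ p.1 * f₂ p.2) * (f₁ p.1 * f₂ p.2)) *
        Real.log (f p.1 p.2 / (f₁ p.1 * f₂ p.2)) from by ring,
      div_mul_cancel₀ _ hne]
  rw [step1, step2, step3]
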